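/- A vector x̄ ∈ ℝ^p minimizes F_λ(x) = ‖Kx - y‖² + 2λ‖x‖₁ if and only if x̄ satisfies the fixed point equation x̄ = S_λ(x̄ + Kᵀ(y - Kx̄)), where S_λ is the componentwise soft-thresholding operator with threshold λ. -/

import Mathlib

open Finset Filter

/-- scalar soft-thresholding -/
noncomputable def softS (lam u : ℝ) : ℝ := Real.sign u * max (|u| - lam) 0

/-- componentwise soft-thresholding on ℝ^p -/
noncomputable def softV {p : ℕ} (lam : ℝ) (u : Fin p → ℝ) : Fin p → ℝ :=
  fun i => softS lam (u i)

/-- Euclidean norm on ℝ^n -/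
noncomputable def norm2 {n : ℕ} (v : Fin n → ℝ) : ℝ := Real.sqrt (∑ i, (v i) ^ 2)

/-- ℓ¹ norm on ℝ^n -/
noncomputable def normOne {n : ℕ} (v : Fin n → ℝ) : ℝ := ∑ i, |v i|

/-- the ℓ¹-penalized least-squares functional -/
noncomputable def Fl {m p : ℕ} (K : Matrix (Fin m) (Fin p) ℝ) (y : Fin m → ℝ)
    (lam : ℝ) (x : Fin p → ℝ) : ℝ :=
  (norm2 (K.mulVec x - y)) ^ 2 + 2 * lam * normOne x

/-- Fixed point characterization for scalar soft-thresholding. -/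
lemma fp_iff_aux {lam a g : ℝ} (hlam : 0 ≤ lam) :
    a = Real.sign (a + g) * max (|a + g| - lam) 0 ↔ (g * a = lam * |a| ∧ |g| ≤ lam) := by
  constructor
  · intro h
    rcases lt_trichotomy (a + g) 0 with hu | hu | hu
    · rw [Real.sign_of_neg hu, abs_of_neg hu] at h
      rcases le_or_gt (-(a+g)) lam with hle | hlt
      · rw [max_eq_right (by linarith)] at h
        simp at h
        subst h
        refine ⟨by simp, ?_⟩
        simp only [zero_add] at hu hle
        rw [abs_of_neg hu]; linarith
      · rw [max_eq_left (by linarith)] at h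
        have hg : g = -lam := by nlinarith [h]
        have ha : a < 0 := by nlinarith [h]
        refine ⟨?_, ?_⟩
        · rw [hg, abs_of_neg ha]; ring
        · rw [hg, abs_neg, abs_of_nonneg hlam]
    · have h0 : a = 0 := by
        rw [hu] at h; simpa using h
      subst h0
      simp only [zero_add] at hu
      subst hu
      exact ⟨by simp, by simpa using hlam⟩
    · rw [Real.sign_of_pos hu, abs_of_pos hu] at h
      rcases le_or_gt (a+g) lam with hle | hlt
      · rw [max_eq_right (by linarith)] at h
        simp at h
        subst h
        refine ⟨by simp, ?_⟩
        simp only [zero_add] at hu hle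
        rw [abs_of_pos hu]; linarith
      · rw [max_eq_left (by linarith)] at h
        have hg : g = lam := by nlinarith [h]
        have ha : 0 < a := by nlinarith [h]
        refine ⟨?_, ?_⟩
        · rw [hg, abs_of_pos ha]
        · rw [hg, abs_of_nonneg hlam]
  · rintro ⟨h1, h2⟩
    rcases lt_trichotomy a 0 with ha | ha | ha
    · have hg : g = -lam := by
        have h3 : g * a = lam * (-a) := by rw [h1, abs_of_neg ha]
        nlinarith [h3]
      have hu : a + g < 0 := by rw [hg]; linarith
      rw [Real.sign_of_neg hu, abs_of_neg hu, max_eq_left (by rw [hg]; linarith)]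
      rw [hg]; ring
    · rw [ha]
      simp only [zero_add]
      rw [max_eq_right (by linarith [abs_le.mp h2] : |g| - lam ≤ 0)]
      simp
    · have hg : g = lam := by
        have h3 : g * a = lam * a := by rw [h1, abs_of_pos ha]
        nlinarith [h3]
      have hu : 0 < a + g := by rw [hg]; linarith
      rw [Real.sign_of_pos hu, abs_of_pos hu, max_eq_left (by rw [hg]; linarith)]
      rw [hg]; ring

/-- Scalar optimality condition from one-dimensional perturbations. -/
lemma scalar_opt_aux {c g lam a : ℝ} (hc : 0 ≤ c) (hlam : 0 ≤ lam)
    (h : ∀ t : ℝ, 0 ≤ c * t ^ 2 - 2 * g * t + 2 * lam * (|a + t| - |a|)) :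
    g * a = lam * |a| ∧ |g| ≤ lam := by
  rcases lt_trichotomy a 0 with ha | ha | ha
  · have hd : g = -lam := by
      by_contra hd
      have hdne : lam + g ≠ 0 := fun hz => hd (by linarith)
      set d : ℝ := lam + g with hdd
      set ε : ℝ := min (1/(c+1)) ((-a)/(|d|+1)) with he
      have hε0 : 0 < ε := lt_min (by positivity) (div_pos (by linarith) (by positivity))
      have hε1 : ε ≤ 1/(c+1) := min_le_left _ _
      have hε2 : ε ≤ (-a)/(|d|+1) := min_le_right _ _
      have hda : |d| * ε < -a := by
        have h1 : |d| * ε ≤ |d| * ((-a)/(|d|+1)) :=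
          mul_le_mul_of_nonneg_left hε2 (abs_nonneg d)
        have h2 : |d| * ((-a)/(|d|+1)) < -a := by
          rw [div_eq_mul_inv]
          rw [← mul_assoc]
          rw [mul_comm (|d|) (-a), mul_assoc]
          have : |d| * (|d|+1)⁻¹ < 1 := by
            rw [mul_inv_lt_iff₀ (by positivity)]; linarith
          nlinarith [this, ha]
        linarith
      have hneg : a + d * ε < 0 := by
        have : d * ε ≤ |d| * ε := mul_le_mul_of_nonneg_right (le_abs_self d) hε0.le
        linarith
      have hcε : c * ε < 2 := by
        have : c * ε ≤ c * (1/(c+1)) := mul_le_mul_of_nonneg_left hε1 hc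
        have h2 : c * (1/(c+1)) < 1 := by
          rw [mul_one_div, div_lt_one (by positivity)]; linarith
        linarith
      have := h (d * ε)
      rw [abs_of_neg hneg, abs_of_neg ha] at this
      have hd2 : 0 < d^2 * ε := by positivity
      nlinarith [this, hd2, hcε, sq_nonneg d, hε0]
    refine ⟨by rw [hd, abs_of_neg ha]; ring, by rw [hd, abs_neg, abs_of_nonneg hlam]⟩
  · subst ha
    refine ⟨by simp, ?_⟩
    rw [abs_le]
    constructor
    · by_contra hlt
      push_neg at hlt
      set d : ℝ := lam + g with hdd
      have hdpos : d < 0 := by simpa [hdd] using (by linarith : lam + g < 0)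
      set t : ℝ := d / (c+1) with ht
      have ht0 : t < 0 := div_neg_of_neg_of_pos hdpos (by positivity)
      have := h t
      rw [zero_add, abs_of_neg ht0] at this
      simp only [abs_zero, sub_zero] at this
      have hct : c * t = c * d / (c+1) := by rw [ht]; ring
      have hkey : c * t^2 - 2*g*t + 2*lam*(-t - 0) = t * (c * t - 2 * d) := by ring
      have hpos : 0 < c * t - 2 * d := by
        have heq : c * t - d = -d/(c+1) := by rw [ht]; field_simp; ring
        have h1 : 0 ≤ -d/(c+1) := div_nonneg (by linarith) (by positivity)
        linarith
      nlinarith [this, ht0, hpos]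
    · by_contra hlt
      push_neg at hlt
      set d : ℝ := lam - g with hdd
      have hdpos : d < 0 := by simp [hdd]; linarith
      set t : ℝ := -d / (c+1) with ht
      have ht0 : 0 < t := div_pos (by linarith) (by positivity)
      have := h t
      rw [zero_add, abs_of_pos ht0] at this
      simp only [abs_zero, sub_zero] at this
      have hpos : 0 > c * t + 2 * d := by
        have heq : -d - c * t = -d/(c+1) := by rw [ht]; field_simp; ring
        have h1 : 0 ≤ -d/(c+1) := div_nonneg (by linarith) (by positivity)
        linarith
      nlinarith [this, ht0, hpos]
  · have hd : g = lam := by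
      by_contra hd
      have hdne : lam - g ≠ 0 := fun hz => hd (by linarith)
      set d : ℝ := lam - g with hdd
      set ε : ℝ := min (1/(c+1)) (a/(|d|+1)) with he
      have hε0 : 0 < ε := lt_min (by positivity) (by positivity)
      have hε1 : ε ≤ 1/(c+1) := min_le_left _ _
      have hε2 : ε ≤ a/(|d|+1) := min_le_right _ _
      have hda : |d| * ε < a := by
        have h1 : |d| * ε ≤ |d| * (a/(|d|+1)) :=
          mul_le_mul_of_nonneg_left hε2 (abs_nonneg d)
        have h2 : |d| * (a/(|d|+1)) < a := by
          rw [div_eq_mul_inv, ← mul_assoc, mul_comm (|d|) a, mul_assoc]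
          have : |d| * (|d|+1)⁻¹ < 1 := by
            rw [mul_inv_lt_iff₀ (by positivity)]; linarith
          nlinarith [this, ha]
        linarith
      have hpos2 : 0 < a + (-d) * ε := by
        have hle : d * ε ≤ |d| * ε := mul_le_mul_of_nonneg_right (le_abs_self d) hε0.le
        nlinarith [hda, hle]
      have hcε : c * ε < 2 := by
        have : c * ε ≤ c * (1/(c+1)) := mul_le_mul_of_nonneg_left hε1 hc
        have h2 : c * (1/(c+1)) < 1 := by
          rw [mul_one_div, div_lt_one (by positivity)]; linarith
        linarith
      have := h ((-d) * ε)
      rw [abs_of_pos hpos2, abs_of_pos ha] at this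
      have hd2 : 0 < d^2 * ε := by positivity
      nlinarith [this, hd2, hcε, hε0]
    refine ⟨by rw [hd, abs_of_pos ha], by rw [hd, abs_of_nonneg hlam]⟩

lemma adj_sum_aux {m p : ℕ} (K : Matrix (Fin m) (Fin p) ℝ) (r : Fin m → ℝ) (v : Fin p → ℝ) :
    ∑ j, r j * (K.mulVec v j) = ∑ i, (K.transpose.mulVec r) i * v i := by
  simp only [Matrix.mulVec, dotProduct, Matrix.transpose_apply, Finset.mul_sum,
    Finset.sum_mul]
  rw [Finset.sum_comm]
  exact Finset.sum_congr rfl fun i _ => Finset.sum_congr rfl fun j _ => by ring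

/-- quadratic expansion of the functional around `xbar`. -/
lemma expand_aux {m p : ℕ} (K : Matrix (Fin m) (Fin p) ℝ) (y : Fin m → ℝ) (lam : ℝ)
    (xbar x : Fin p → ℝ) :
    Fl K y lam x = Fl K y lam xbar + (∑ j, (K.mulVec (x - xbar) j)^2)
      + 2 * ∑ i, (lam * |x i| - (K.transpose.mulVec (y - K.mulVec xbar)) i * x i)
      - 2 * ∑ i, (lam * |xbar i| - (K.transpose.mulVec (y - K.mulVec xbar)) i * xbar i) := by
  have hsq : ∀ v : Fin m → ℝ, (norm2 v)^2 = ∑ j, (v j)^2 := fun v =>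
    Real.sq_sqrt (Finset.sum_nonneg fun j _ => sq_nonneg _)
  have S1 : ∑ j, ((K.mulVec x - y) j)^2
      = ∑ j, ((K.mulVec xbar - y) j)^2 + ∑ j, (K.mulVec (x - xbar) j)^2
        + 2 * ∑ j, ((K.mulVec xbar - y) j) * (K.mulVec (x - xbar) j) := by
    rw [Finset.mul_sum, ← Finset.sum_add_distrib, ← Finset.sum_add_distrib]
    apply Finset.sum_congr rfl
    intro j _
    have hpt : (K.mulVec x - y) j = (K.mulVec xbar - y) j + (K.mulVec (x - xbar)) j := by
      simp [Matrix.mulVec_sub, Pi.sub_apply]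
    rw [hpt]; ring
  have S2 : ∑ j, ((K.mulVec xbar - y) j) * (K.mulVec (x - xbar) j)
      = - ∑ i, (K.transpose.mulVec (y - K.mulVec xbar)) i * (x i - xbar i) := by
    rw [adj_sum_aux K (K.mulVec xbar - y) (x - xbar)]
    rw [← Finset.sum_neg_distrib]
    apply Finset.sum_congr rfl
    intro i _
    have h1 : (K.transpose.mulVec (y - K.mulVec xbar)) i
        = - (K.transpose.mulVec (K.mulVec xbar - y)) i := by
      have : y - K.mulVec xbar = -(K.mulVec xbar - y) := by ring
      rw [this, Matrix.mulVec_neg, Pi.neg_apply]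
    rw [h1, Pi.sub_apply]
    ring
  simp only [Fl, hsq, normOne]
  rw [S1, S2]
  rw [Finset.sum_sub_distrib, Finset.sum_sub_distrib, ← Finset.mul_sum, ← Finset.mul_sum]
  have S3 : ∑ i, (K.transpose.mulVec (y - K.mulVec xbar)) i * (x i - xbar i)
      = ∑ i, (K.transpose.mulVec (y - K.mulVec xbar)) i * x i
        - ∑ i, (K.transpose.mulVec (y - K.mulVec xbar)) i * xbar i := by
    rw [← Finset.sum_sub_distrib]
    exact Finset.sum_congr rfl fun i _ => by ring
  rw [S3]; ring

theorem minimizer_iff_fixed_point {m p : ℕ} (K : Matrix (Fin m) (Fin p) ℝ)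
    (y : Fin m → ℝ) (lam : ℝ) (hlam : 0 ≤ lam) (xbar : Fin p → ℝ) :
    (∀ x : Fin p → ℝ, Fl K y lam xbar ≤ Fl K y lam x) ↔
      xbar = softV lam (xbar + K.transpose.mulVec (y - K.mulVec xbar)) := by
  set g : Fin p → ℝ := K.transpose.mulVec (y - K.mulVec xbar) with hg
  have hfp_eq : (xbar = softV lam (xbar + g)) ↔
      ∀ i, g i * xbar i = lam * |xbar i| ∧ |g i| ≤ lam := by
    constructor
    · intro h i
      have := congrFun h i
      rw [softV, softS, Pi.add_apply] at this
      exact (fp_iff_aux hlam).mp this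
    · intro h
      funext i
      rw [softV, softS, Pi.add_apply]
      exact (fp_iff_aux hlam).mpr (h i)
  rw [hfp_eq]
  constructor
  · intro hmin i
    set c : ℝ := ∑ j, (K j i)^2 with hc
    have hc0 : 0 ≤ c := Finset.sum_nonneg fun j _ => sq_nonneg _
    apply scalar_opt_aux hc0 hlam
    intro t
    have hx := hmin (xbar + Pi.single i t)
    have hexp := expand_aux K y lam xbar (xbar + Pi.single i t)
    rw [← hg] at hexp
    have hdiff : (xbar + Pi.single i t) - xbar = Pi.single i t := by
      funext i'; simp
    rw [hdiff] at hexp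
    have hA : ∑ j, (K.mulVec (Pi.single i t) j)^2 = c * t^2 := by
      rw [hc, Finset.sum_mul]
      apply Finset.sum_congr rfl
      intro j _
      rw [Matrix.mulVec_single]
      simp only [Pi.smul_apply, op_smul_eq_mul, Matrix.col_apply]
      ring
    have hB : ∑ i', (lam * |(xbar + Pi.single i t : Fin p → ℝ) i'| - g i' * ((xbar + Pi.single i t : Fin p → ℝ) i'))
        - ∑ i', (lam * |xbar i'| - g i' * xbar i')
        = lam * (|xbar i + t| - |xbar i|) - g i * t := by
      rw [← Finset.sum_sub_distrib]
      rw [Finset.sum_eq_single i]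
      · simp only [Pi.add_apply, Pi.single_eq_same]
        ring
      · intro i' _ hne
        simp only [Pi.add_apply, Pi.single_eq_of_ne hne]
        ring
      · intro habs
        exact absurd (Finset.mem_univ i) habs
    linarith [hx, hexp, hA, hB]
  · intro h x
    rw [expand_aux K y lam xbar x]
    have hA : 0 ≤ ∑ j, (K.mulVec (x - xbar) j)^2 :=
      Finset.sum_nonneg fun j _ => sq_nonneg _
    have hB : 0 ≤ ∑ i, (lam * |x i| - g i * x i) := by
      apply Finset.sum_nonneg
      intro i _
      have h1 : g i * x i ≤ |g i| * |x i| := by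
        calc g i * x i ≤ |g i * x i| := le_abs_self _
        _ = |g i| * |x i| := abs_mul _ _
      have h2 : |g i| * |x i| ≤ lam * |x i| :=
        mul_le_mul_of_nonneg_right (h i).2 (abs_nonneg _)
      linarith
    have hC : ∑ i, (lam * |xbar i| - g i * xbar i) = 0 := by
      apply Finset.sum_eq_zero
      intro i _
      rw [← (h i).1]; ring
    rw [hC]
    linarith
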